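/- Let A ∈ ℝ^{m×n}, let Ω ∈ ℝ^{n×l} be such that A Ω = Q R is a reduced QR factorization with Q ∈ ℝ^{m×l} having orthonormal columns. Then for any matrix F ∈ ℝ^{l×n}, ‖A − QQᵀA‖₂ ≤ 2‖AΩF − A‖₂. -/

import Mathlib

open Matrix BigOperators

theorem Matrix.isHermitian_transpose_mul_self {m n : Type*} [Fintype m]
    (A : Matrix m n ℝ) : (Aᵀ * A).IsHermitian := by
  simpa [conjTranspose_eq_transpose_of_trivial] using isHermitian_conjTranspose_mul_self A

noncomputable def singularValue {m n : ℕ} (A : Matrix (Fin m) (Fin n) ℝ) : Fin n → ℝ :=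
  fun j =>
    Real.sqrt ((Matrix.isHermitian_transpose_mul_self A).eigenvalues
      (Tuple.sort (fun i => -(Matrix.isHermitian_transpose_mul_self A).eigenvalues i) j))

noncomputable def matSpectralNorm {m n : ℕ} (A : Matrix (Fin m) (Fin n) ℝ) : ℝ :=
  ‖LinearMap.toContinuousLinearMap (Matrix.toEuclideanLin A)‖

noncomputable def frobNorm {m n : ℕ} (A : Matrix (Fin m) (Fin n) ℝ) : ℝ :=
  Real.sqrt (∑ i, ∑ j, (A i j)^2)

noncomputable def pinv {a b : ℕ} (W : Matrix (Fin a) (Fin b) ℝ) : Matrix (Fin b) (Fin a) ℝ :=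
  if a ≤ b then Wᵀ * (W * Wᵀ)⁻¹ else (Wᵀ * W)⁻¹ * Wᵀ

lemma toCLM_mul {a b c : ℕ} (X : Matrix (Fin a) (Fin b) ℝ) (Y : Matrix (Fin b) (Fin c) ℝ) :
    LinearMap.toContinuousLinearMap (Matrix.toEuclideanLin (X * Y)) =
      (LinearMap.toContinuousLinearMap (Matrix.toEuclideanLin X)).comp
        (LinearMap.toContinuousLinearMap (Matrix.toEuclideanLin Y)) := by
  ext v
  simp [Matrix.toEuclideanLin_apply, Matrix.mulVec_mulVec]

lemma spectralNorm_mul_le {a b c : ℕ} (X : Matrix (Fin a) (Fin b) ℝ)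
    (Y : Matrix (Fin b) (Fin c) ℝ) :
    matSpectralNorm (X * Y) ≤ matSpectralNorm X * matSpectralNorm Y := by
  rw [matSpectralNorm, toCLM_mul]
  exact ContinuousLinearMap.opNorm_comp_le _ _

lemma spectralNorm_Q_le {m l : ℕ} (Q : Matrix (Fin m) (Fin l) ℝ) (hQ : Qᵀ * Q = 1) :
    matSpectralNorm Q ≤ 1 := by
  set f := LinearMap.toContinuousLinearMap (Matrix.toEuclideanLin Q) with hf
  have hadj : ContinuousLinearMap.adjoint f ∘L f = 1 := by
    rw [hf, ← LinearMap.adjoint_toContinuousLinearMap]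
    have h1 : Matrix.toEuclideanLin Qᵀ = LinearMap.adjoint (Matrix.toEuclideanLin Q) := by
      have : Qᴴ = Qᵀ := by ext i j; simp [Matrix.conjTranspose_apply]
      rw [← this]; exact Matrix.toEuclideanLin_conjTranspose_eq_adjoint Q
    rw [← h1, ← toCLM_mul, hQ]
    ext v
    simp [Matrix.toEuclideanLin_apply]
  have := (ContinuousLinearMap.norm_map_iff_adjoint_comp_self f).mpr hadj
  exact ContinuousLinearMap.opNorm_le_bound f zero_le_one (fun x => by rw [this x, one_mul])

lemma spectralNorm_transpose {m l : ℕ} (Q : Matrix (Fin m) (Fin l) ℝ) :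
    matSpectralNorm Qᵀ = matSpectralNorm Q := by
  unfold matSpectralNorm
  have h1 : Matrix.toEuclideanLin Qᵀ = LinearMap.adjoint (Matrix.toEuclideanLin Q) := by
    have : Qᴴ = Qᵀ := by ext i j; simp [Matrix.conjTranspose_apply]
    rw [← this]; exact Matrix.toEuclideanLin_conjTranspose_eq_adjoint Q
  rw [h1, LinearMap.adjoint_toContinuousLinearMap]
  exact ContinuousLinearMap.adjoint.norm_map _

/-- If AΩ = QR is a reduced QR factorization, then for any F,
‖A − QQᵀA‖₂ ≤ 2‖AΩF − A‖₂. -/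
theorem projection_error_bound {m n l : ℕ} (A : Matrix (Fin m) (Fin n) ℝ)
    (Ω : Matrix (Fin n) (Fin l) ℝ) (Q : Matrix (Fin m) (Fin l) ℝ)
    (R : Matrix (Fin l) (Fin l) ℝ)
    (hQ : Qᵀ * Q = 1) (hQR : A * Ω = Q * R) (hR : ∀ i j : Fin l, j < i → R i j = 0)
    (F : Matrix (Fin l) (Fin n) ℝ) :
    matSpectralNorm (A - Q * Qᵀ * A) ≤ 2 * matSpectralNorm (A * Ω * F - A) := by
  set X := A * Ω * F - A with hX
  have h1 : Q * Qᵀ * (A * Ω) = A * Ω := by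
    rw [hQR, ← Matrix.mul_assoc, Matrix.mul_assoc Q Qᵀ Q, hQ, Matrix.mul_one]
  have h2 : Q * Qᵀ * (A * Ω * F) = A * Ω * F := by
    rw [← Matrix.mul_assoc (Q * Qᵀ) (A * Ω) F, h1]
  have key : A - Q * Qᵀ * A = Q * Qᵀ * X - X := by
    rw [hX, Matrix.mul_sub, h2]
    abel
  rw [key]
  have htri : matSpectralNorm (Q * Qᵀ * X - X) ≤ matSpectralNorm (Q * Qᵀ * X) + matSpectralNorm X := by
    unfold matSpectralNorm
    rw [map_sub, map_sub]
    exact norm_sub_le _ _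
  have hnn : 0 ≤ matSpectralNorm X := norm_nonneg _
  have hQQ : matSpectralNorm (Q * Qᵀ * X) ≤ matSpectralNorm X := by
    calc matSpectralNorm (Q * Qᵀ * X) ≤ matSpectralNorm (Q * Qᵀ) * matSpectralNorm X :=
          spectralNorm_mul_le _ _
      _ ≤ (matSpectralNorm Q * matSpectralNorm Qᵀ) * matSpectralNorm X := by
          apply mul_le_mul_of_nonneg_right (spectralNorm_mul_le _ _) hnn
      _ ≤ 1 * matSpectralNorm X := by
          apply mul_le_mul_of_nonneg_right _ hnn
          rw [spectralNorm_transpose]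
          calc matSpectralNorm Q * matSpectralNorm Q ≤ 1 * 1 :=
            mul_le_mul (spectralNorm_Q_le Q hQ) (spectralNorm_Q_le Q hQ) (norm_nonneg _) zero_le_one
          _ = 1 := one_mul 1
      _ = matSpectralNorm X := one_mul _
  linarith
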